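/- For all real $u, w$ and real $p \ge 2$, $\left| |u+w|^{p-1}(u+w) - |u|^{p-1}u - p|u|^{p-1}w \right| \le C(p)(1+|u|^{p-1})(|w|^{p+1} + |w|^2)$ for some constant $C(p)$ depending only on $p$. -/

import Mathlib

/-- One-sided power mean value inequality: for `0 ≤ s ≤ t`, `q ≥ 1`,
`t^q - s^q ≤ q * t^(q-1) * (t - s)`. -/
lemma aux_rpow_sub (q : ℝ) (hq : 1 ≤ q) {s t : ℝ} (hs : 0 ≤ s) (hst : s ≤ t) :
    t ^ q - s ^ q ≤ q * t ^ (q - 1) * (t - s) := by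
  rcases eq_or_lt_of_le hst with rfl | h
  · simp
  · obtain ⟨c, hc, hceq⟩ := exists_hasDerivAt_eq_slope (fun x => x ^ q)
      (fun x => q * x ^ (q - 1)) h
      (fun x _ => ((Real.hasDerivAt_rpow_const (p := q) (Or.inr hq)).continuousAt).continuousWithinAt)
      (fun x _ => Real.hasDerivAt_rpow_const (Or.inr hq))
    have hc0 : 0 ≤ c := le_trans hs hc.1.le
    have hct : c ≤ t := hc.2.le
    have hne : t - s ≠ 0 := by intro h'; exact absurd h' (sub_ne_zero.2 (ne_of_gt h))
    rw [eq_div_iff hne] at hceq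
    have heq : t ^ q - s ^ q = q * c ^ (q - 1) * (t - s) := by linear_combination -hceq
    rw [heq]
    have h1 : c ^ (q - 1) ≤ t ^ (q - 1) := Real.rpow_le_rpow hc0 hct (by linarith)
    have hq0 : (0:ℝ) ≤ q := by linarith
    exact mul_le_mul_of_nonneg_right
      (mul_le_mul_of_nonneg_left h1 hq0) (by linarith)

/-- Two-sided version: `| t^q - s^q | ≤ q * (max s t)^(q-1) * |t - s|` for `s, t ≥ 0`. -/
lemma aux_rpow_abs_sub (q : ℝ) (hq : 1 ≤ q) {s t : ℝ} (hs : 0 ≤ s) (ht : 0 ≤ t) :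
    |t ^ q - s ^ q| ≤ q * (max s t) ^ (q - 1) * |t - s| := by
  rcases le_total s t with h | h
  · rw [abs_of_nonneg (sub_nonneg.2 (Real.rpow_le_rpow hs h (by linarith))),
      abs_of_nonneg (sub_nonneg.2 h), max_eq_right h]
    exact aux_rpow_sub q hq hs h
  · rw [abs_sub_comm, abs_sub_comm t s,
      abs_of_nonneg (sub_nonneg.2 (Real.rpow_le_rpow ht h (by linarith))),
      abs_of_nonneg (sub_nonneg.2 h), max_eq_left h]
    exact aux_rpow_sub q hq ht h

/-- Derivative of `x ↦ |x|^(p-1) * x` is `p * |x|^(p-1)` for `p ≥ 2`. -/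
lemma aux_hasDerivAt (p : ℝ) (hp : 2 ≤ p) (x : ℝ) :
    HasDerivAt (fun y : ℝ => |y| ^ (p - 1) * y) (p * |x| ^ (p - 1)) x := by
  have hq : 1 ≤ p - 1 := by linarith
  rcases lt_trichotomy x 0 with hx | rfl | hx
  · -- x < 0
    have hne : (-x) ≠ 0 := ne_of_gt (by linarith : (0:ℝ) < -x)
    have h1 : HasDerivAt (fun y : ℝ => (-y) ^ (p - 1))
        ((p - 1) * (-x) ^ (p - 1 - 1) * (-1)) x :=
      (Real.hasDerivAt_rpow_const (Or.inr hq)).comp x (hasDerivAt_neg x)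
    have h2 : HasDerivAt (fun y : ℝ => (-y) ^ (p - 1) * y)
        ((p - 1) * (-x) ^ (p - 1 - 1) * (-1) * x + (-x) ^ (p - 1) * 1) x :=
      h1.mul (hasDerivAt_id x)
    have hd : (p - 1) * (-x) ^ (p - 1 - 1) * (-1) * x + (-x) ^ (p - 1) * 1
        = p * |x| ^ (p - 1) := by
      have h3 : (-x) ^ (p - 1 - 1) * (-x) = (-x) ^ (p - 1) := by
        rw [← Real.rpow_add_one hne (p - 1 - 1)]
        ring_nf
      rw [abs_of_neg hx]
      nlinarith [h3]
    rw [← hd]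
    refine h2.congr_of_eventuallyEq ?_
    filter_upwards [Iio_mem_nhds hx] with y hy
    rw [abs_of_neg hy]
  · -- x = 0
    have h0 : p * |(0:ℝ)| ^ (p - 1) = 0 := by
      rw [abs_zero, Real.zero_rpow (by linarith : p - 1 ≠ 0), mul_zero]
    rw [h0, hasDerivAt_iff_tendsto_slope]
    have hcont : ContinuousAt (fun y : ℝ => |y| ^ (p - 1)) 0 :=
      continuous_abs.continuousAt.rpow_const (Or.inr (by linarith))
    have hval : |(0:ℝ)| ^ (p - 1) = 0 := by
      rw [abs_zero, Real.zero_rpow (by linarith : p - 1 ≠ 0)]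
    have htend : Filter.Tendsto (fun y : ℝ => |y| ^ (p - 1)) (nhdsWithin 0 {0}ᶜ) (nhds 0) := by
      have := hcont.continuousWithinAt (s := {(0:ℝ)}ᶜ)
      rw [ContinuousWithinAt, hval] at this
      exact this
    refine htend.congr' ?_
    filter_upwards [self_mem_nhdsWithin] with y hy
    have hy0 : y ≠ 0 := hy
    rw [slope_def_field]
    field_simp
    ring
  · -- x > 0
    have hne : x ≠ 0 := ne_of_gt hx
    have h1 : HasDerivAt (fun y : ℝ => y ^ (p - 1)) ((p - 1) * x ^ (p - 1 - 1)) x :=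
      Real.hasDerivAt_rpow_const (Or.inr hq)
    have h2 : HasDerivAt (fun y : ℝ => y ^ (p - 1) * y)
        ((p - 1) * x ^ (p - 1 - 1) * x + x ^ (p - 1) * 1) x := h1.mul (hasDerivAt_id x)
    have hd : (p - 1) * x ^ (p - 1 - 1) * x + x ^ (p - 1) * 1 = p * |x| ^ (p - 1) := by
      have h3 : x ^ (p - 1 - 1) * x = x ^ (p - 1) := by
        rw [← Real.rpow_add_one hne (p - 1 - 1)]
        ring_nf
      rw [abs_of_pos hx]
      nlinarith [h3]
    rw [← hd]
    refine h2.congr_of_eventuallyEq ?_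
    filter_upwards [Ioi_mem_nhds hx] with y hy
    rw [abs_of_pos hy]

/-- Mean value step: there is `c` with `|c - u| ≤ |w|` such that
`F(u+w) - F(u) = p |c|^(p-1) w`. -/
lemma aux_mvt (p : ℝ) (hp : 2 ≤ p) (u w : ℝ) :
    ∃ c : ℝ, |c - u| ≤ |w| ∧
      |u + w| ^ (p - 1) * (u + w) - |u| ^ (p - 1) * u = p * |c| ^ (p - 1) * w := by
  rcases lt_trichotomy w 0 with hw | rfl | hw
  · obtain ⟨c, hc, hceq⟩ := exists_hasDerivAt_eq_slope (fun y : ℝ => |y| ^ (p - 1) * y)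
      (fun y => p * |y| ^ (p - 1)) (by linarith : u + w < u)
      (fun y _ => (aux_hasDerivAt p hp y).continuousAt.continuousWithinAt)
      (fun y _ => aux_hasDerivAt p hp y)
    refine ⟨c, ?_, ?_⟩
    · rw [abs_of_neg hw, abs_le]
      constructor
      · linarith [hc.1]
      · linarith [hc.2]
    · have hne : u - (u + w) ≠ 0 := by intro h; apply ne_of_lt hw; linarith
      rw [eq_div_iff hne] at hceq
      linear_combination hceq
  · exact ⟨u, by simp, by ring⟩
  · obtain ⟨c, hc, hceq⟩ := exists_hasDerivAt_eq_slope (fun y : ℝ => |y| ^ (p - 1) * y)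
      (fun y => p * |y| ^ (p - 1)) (by linarith : u < u + w)
      (fun y _ => (aux_hasDerivAt p hp y).continuousAt.continuousWithinAt)
      (fun y _ => aux_hasDerivAt p hp y)
    refine ⟨c, ?_, ?_⟩
    · rw [abs_of_pos hw, abs_le]
      constructor
      · linarith [hc.1]
      · linarith [hc.2]
    · have hne : u + w - u ≠ 0 := by intro h; apply ne_of_gt hw; linarith
      rw [eq_div_iff hne] at hceq
      linear_combination -hceq

/-- For all real `u, w` and `p ≥ 2`,
`||u+w|^{p-1}(u+w) - |u|^{p-1}u - p|u|^{p-1}w| ≤ C(p)(1+|u|^{p-1})(|w|^{p+1}+|w|²)`. -/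
theorem stmt_6 (p : ℝ) (hp : 2 ≤ p) :
    ∃ C > (0:ℝ), ∀ u w : ℝ,
      abs (|u + w| ^ (p - 1) * (u + w) - |u| ^ (p - 1) * u - p * |u| ^ (p - 1) * w) ≤
        C * (1 + |u| ^ (p - 1)) * (|w| ^ (p + 1) + |w| ^ 2) := by
  have h2 : (0:ℝ) < 2 ^ (p - 2) := Real.rpow_pos_of_pos (by norm_num) _
  have hp1 : (0:ℝ) < p - 1 := by linarith
  have hppos : (0:ℝ) < p := by linarith
  set K : ℝ := p * (p - 1) * 2 ^ (p - 2) with hKdef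
  have hKpos : 0 < K := by positivity
  refine ⟨2 * K, by positivity, fun u w => ?_⟩
  have hA1 : (0:ℝ) ≤ |u| ^ (p - 1) := Real.rpow_nonneg (abs_nonneg u) _
  have hBp1 : (0:ℝ) ≤ |w| ^ (p + 1) := Real.rpow_nonneg (abs_nonneg w) _
  have hB2' : |w| ^ (2:ℝ) = |w| ^ (2:ℕ) := by
    rw [show (2:ℝ) = ((2:ℕ):ℝ) by norm_num, Real.rpow_natCast]
  rcases eq_or_ne w 0 with rfl | hw0
  · simp only [abs_zero, add_zero, mul_zero, sub_zero, sub_self, abs_zero]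
    positivity
  obtain ⟨c, hcu, hceq⟩ := aux_mvt p hp u w
  have hG : |u + w| ^ (p - 1) * (u + w) - |u| ^ (p - 1) * u - p * |u| ^ (p - 1) * w
      = p * (|c| ^ (p - 1) - |u| ^ (p - 1)) * w := by
    linear_combination hceq
  have hcabs : |c| ≤ |u| + |w| := by
    calc |c| = |u + (c - u)| := by ring_nf
    _ ≤ |u| + |c - u| := abs_add_le _ _
    _ ≤ |u| + |w| := by linarith
  have hdiff : |(|c| - |u|)| ≤ |w| := le_trans (abs_abs_sub_abs_le_abs_sub c u) hcu
  -- second-order estimate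
  have hL2 : |(|c| ^ (p - 1) - |u| ^ (p - 1))| ≤ (p - 1) * (|u| + |w|) ^ (p - 2) * |w| := by
    have h1 := aux_rpow_abs_sub (p - 1) (by linarith) (abs_nonneg u) (abs_nonneg c)
    have he : p - 1 - 1 = p - 2 := by ring
    rw [he] at h1
    have hmax : max |u| |c| ≤ |u| + |w| :=
      max_le (le_add_of_nonneg_right (abs_nonneg w)) hcabs
    have hmaxpow : (max |u| |c|) ^ (p - 2) ≤ (|u| + |w|) ^ (p - 2) :=
      Real.rpow_le_rpow (le_trans (abs_nonneg u) (le_max_left _ _)) hmax (by linarith)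
    have hmn : (0:ℝ) ≤ (max |u| |c|) ^ (p - 2) := Real.rpow_nonneg (le_trans (abs_nonneg u) (le_max_left _ _)) _
    calc |(|c| ^ (p - 1) - |u| ^ (p - 1))| ≤ (p - 1) * (max |u| |c|) ^ (p - 2) * |(|c| - |u|)| := h1
    _ ≤ (p - 1) * (|u| + |w|) ^ (p - 2) * |w| := by
        apply mul_le_mul
        · exact mul_le_mul_of_nonneg_left hmaxpow (by linarith)
        · exact hdiff
        · exact abs_nonneg _
        · positivity
  -- split the power of the sum
  have hsplit : (|u| + |w|) ^ (p - 2) ≤ 2 ^ (p - 2) * (|u| ^ (p - 2) + |w| ^ (p - 2)) := by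
    have hm : |u| + |w| ≤ 2 * max |u| |w| := by
      rcases le_total |u| |w| with h | h
      · rw [max_eq_right h]; linarith
      · rw [max_eq_left h]; linarith
    have h0m : (0:ℝ) ≤ max |u| |w| := le_trans (abs_nonneg u) (le_max_left _ _)
    calc (|u| + |w|) ^ (p - 2) ≤ (2 * max |u| |w|) ^ (p - 2) :=
        Real.rpow_le_rpow (by positivity) hm (by linarith)
    _ = 2 ^ (p - 2) * (max |u| |w|) ^ (p - 2) := Real.mul_rpow (by norm_num) h0m
    _ ≤ 2 ^ (p - 2) * (|u| ^ (p - 2) + |w| ^ (p - 2)) := by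
        apply mul_le_mul_of_nonneg_left _ (le_of_lt h2)
        rcases le_total |u| |w| with h | h
        · rw [max_eq_right h]
          have : (0:ℝ) ≤ |u| ^ (p - 2) := Real.rpow_nonneg (abs_nonneg u) _
          linarith
        · rw [max_eq_left h]
          have : (0:ℝ) ≤ |w| ^ (p - 2) := Real.rpow_nonneg (abs_nonneg w) _
          linarith
  -- elementary power comparisons
  have hupow : |u| ^ (p - 2) ≤ 1 + |u| ^ (p - 1) := by
    rcases le_total |u| 1 with h | h
    · have : |u| ^ (p - 2) ≤ 1 := Real.rpow_le_one (abs_nonneg u) h (by linarith)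
      linarith
    · have : |u| ^ (p - 2) ≤ |u| ^ (p - 1) :=
        Real.rpow_le_rpow_of_exponent_le h (by linarith)
      linarith
  have hwpow : |w| ^ (p - 2) * |w| ^ (2:ℝ) = |w| ^ p := by
    rw [← Real.rpow_add' (abs_nonneg w) (by intro h; linarith [h] : p - 2 + 2 ≠ 0)]
    norm_num
  have hwp : |w| ^ p ≤ |w| ^ (p + 1) + |w| ^ (2:ℝ) := by
    have hw0' : 0 < |w| := abs_pos.2 hw0
    rcases le_total |w| 1 with h | h
    · have : |w| ^ p ≤ |w| ^ (2:ℝ) := Real.rpow_le_rpow_of_exponent_ge hw0' h hp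
      linarith
    · have : |w| ^ p ≤ |w| ^ (p + 1) :=
        Real.rpow_le_rpow_of_exponent_le h (by linarith)
      have h2' : (0:ℝ) ≤ |w| ^ (2:ℝ) := Real.rpow_nonneg (abs_nonneg w) _
      linarith
  -- assemble
  have hmain : |p * (|c| ^ (p - 1) - |u| ^ (p - 1)) * w|
      ≤ K * (|u| ^ (p - 2) + |w| ^ (p - 2)) * |w| ^ (2:ℝ) := by
    rw [abs_mul, abs_mul, abs_of_pos hppos]
    have hup : (0:ℝ) ≤ (|u| + |w|) ^ (p - 2) := Real.rpow_nonneg (by positivity) _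
    have step : p * |(|c| ^ (p - 1) - |u| ^ (p - 1))| * |w|
        ≤ p * ((p - 1) * (|u| + |w|) ^ (p - 2) * |w|) * |w| := by
      have := mul_le_mul_of_nonneg_left hL2 (le_of_lt hppos)
      exact mul_le_mul_of_nonneg_right (by linarith) (abs_nonneg w)
    refine le_trans step ?_
    have step2 : (|u| + |w|) ^ (p - 2) * (|w| * |w|)
        ≤ 2 ^ (p - 2) * (|u| ^ (p - 2) + |w| ^ (p - 2)) * (|w| * |w|) :=
      mul_le_mul_of_nonneg_right hsplit (by positivity)
    have hww : |w| * |w| = |w| ^ (2:ℝ) := by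
      rw [hB2']; ring
    calc p * ((p - 1) * (|u| + |w|) ^ (p - 2) * |w|) * |w|
        = (p * (p - 1)) * ((|u| + |w|) ^ (p - 2) * (|w| * |w|)) := by ring
    _ ≤ (p * (p - 1)) * (2 ^ (p - 2) * (|u| ^ (p - 2) + |w| ^ (p - 2)) * (|w| * |w|)) :=
        mul_le_mul_of_nonneg_left step2 (by positivity)
    _ = K * (|u| ^ (p - 2) + |w| ^ (p - 2)) * |w| ^ (2:ℝ) := by
        rw [hKdef, ← hww]; ring
  rw [hG]
  have hfin : K * (|u| ^ (p - 2) + |w| ^ (p - 2)) * |w| ^ (2:ℝ)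
      ≤ 2 * K * (1 + |u| ^ (p - 1)) * (|w| ^ (p + 1) + |w| ^ (2:ℝ)) := by
    have e1 : K * (|u| ^ (p - 2) + |w| ^ (p - 2)) * |w| ^ (2:ℝ)
        = K * (|u| ^ (p - 2) * |w| ^ (2:ℝ)) + K * (|w| ^ p) := by
      rw [← hwpow]; ring
    rw [e1]
    have h2w : (0:ℝ) ≤ |w| ^ (2:ℝ) := Real.rpow_nonneg (abs_nonneg w) _
    have t1 : |u| ^ (p - 2) * |w| ^ (2:ℝ) ≤ (1 + |u| ^ (p - 1)) * (|w| ^ (p + 1) + |w| ^ (2:ℝ)) := by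
      have : |u| ^ (p - 2) * |w| ^ (2:ℝ) ≤ (1 + |u| ^ (p - 1)) * |w| ^ (2:ℝ) :=
        mul_le_mul_of_nonneg_right hupow h2w
      nlinarith [hBp1, hA1]
    have t2 : |w| ^ p ≤ (1 + |u| ^ (p - 1)) * (|w| ^ (p + 1) + |w| ^ (2:ℝ)) := by
      have := mul_le_mul_of_nonneg_right
        (by linarith : (1:ℝ) ≤ 1 + |u| ^ (p - 1)) (by positivity : (0:ℝ) ≤ |w| ^ (p + 1) + |w| ^ (2:ℝ))
      rw [one_mul] at this
      linarith
    have m1 := mul_le_mul_of_nonneg_left t1 hKpos.le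
    have m2 := mul_le_mul_of_nonneg_left t2 hKpos.le
    calc K * (|u| ^ (p - 2) * |w| ^ (2:ℝ)) + K * |w| ^ p
        ≤ K * ((1 + |u| ^ (p - 1)) * (|w| ^ (p + 1) + |w| ^ (2:ℝ)))
          + K * ((1 + |u| ^ (p - 1)) * (|w| ^ (p + 1) + |w| ^ (2:ℝ))) := add_le_add m1 m2
    _ = 2 * K * (1 + |u| ^ (p - 1)) * (|w| ^ (p + 1) + |w| ^ (2:ℝ)) := by ring
  calc |p * (|c| ^ (p - 1) - |u| ^ (p - 1)) * w|
      ≤ K * (|u| ^ (p - 2) + |w| ^ (p - 2)) * |w| ^ (2:ℝ) := hmain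
  _ ≤ 2 * K * (1 + |u| ^ (p - 1)) * (|w| ^ (p + 1) + |w| ^ (2:ℝ)) := hfin
  _ = 2 * K * (1 + |u| ^ (p - 1)) * (|w| ^ (p + 1) + |w| ^ 2) := by rw [hB2']
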